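/- Let G₁(X) = (1/D₁) Σ_{d=1}^{D₁} U_d X U_d† be a D₁-regular superoperator on L(H_{N₁}) with ‖G₁(σ)‖ ≤ λ₁‖σ‖ for all traceless σ, and let Ġ₁(X) = U̇ X U̇† where U̇(|a⟩⊗|b⟩) = U_b|a⟩⊗|b⟩. Then for all A = σ ⊗ Ĩ and B = η ⊗ Ĩ with Tr(σ) = 0, we have |⟨Ġ₁(A), B⟩| ≤ λ₁ ‖A‖·‖B‖. -/

import Mathlib

open Matrix Kronecker BigOperators

/-- Frobenius (Hilbert–Schmidt) norm ‖X‖ = √Tr(X Xᴴ). -/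
noncomputable def frob {n : Type*} [Fintype n] (X : Matrix n n ℂ) : ℝ :=
  Real.sqrt ((Matrix.trace (X * Xᴴ)).re)

/-- Hilbert–Schmidt inner product ⟨X, Y⟩ = Tr(X Yᴴ). -/
noncomputable def hsInner {n : Type*} [Fintype n] (X Y : Matrix n n ℂ) : ℂ :=
  Matrix.trace (X * Yᴴ)

/-- The completely mixed state Ĩ = I / dim. -/
noncomputable def mixedState (n : Type*) [Fintype n] [DecidableEq n] :
    Matrix n n ℂ :=
  ((Fintype.card n : ℂ)⁻¹) • (1 : Matrix n n ℂ)

/-- `G` is an (dim n, D, λ) quantum expander: it is an average of `D` unitary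
conjugations, fixes the completely mixed state, and shrinks every `X`
Hilbert–Schmidt-orthogonal to the mixed state by a factor `lam`. -/
def IsQExpander {n : Type*} [Fintype n] [DecidableEq n] (D : ℕ) (lam : ℝ)
    (G : Matrix n n ℂ → Matrix n n ℂ) : Prop :=
  (∃ U : Fin D → Matrix n n ℂ, (∀ d, U d ∈ Matrix.unitaryGroup n ℂ) ∧
      ∀ X, G X = (D : ℂ)⁻¹ • ∑ d, U d * X * (U d)ᴴ) ∧
  G (mixedState n) = mixedState n ∧
  ∀ X, hsInner X (mixedState n) = 0 → frob (G X) ≤ lam * frob X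

/-- The lifted unitary U̇ on H_{N₁} ⊗ H_{D₁}, with U̇(|a⟩⊗|b⟩) = U_b|a⟩⊗|b⟩,
as a matrix. -/
def liftedU {N₁ D₁ : ℕ} (U : Fin D₁ → Matrix (Fin N₁) (Fin N₁) ℂ) :
    Matrix (Fin N₁ × Fin D₁) (Fin N₁ × Fin D₁) ℂ :=
  fun p q => if p.2 = q.2 then U p.2 p.1 q.1 else 0

lemma hsInner_eq_sum {n : Type*} [Fintype n] (X Y : Matrix n n ℂ) :
    hsInner X Y = ∑ i, ∑ j, X i j * star (Y i j) := by
  simp [hsInner, Matrix.trace, Matrix.mul_apply, Matrix.diag, Matrix.conjTranspose_apply]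

lemma frob_eq_sum {n : Type*} [Fintype n] (X : Matrix n n ℂ) :
    frob X = Real.sqrt (∑ i, ∑ j, ‖X i j‖ ^ 2) := by
  have h : Matrix.trace (X * Xᴴ) = ∑ i, ∑ j, X i j * star (X i j) := hsInner_eq_sum X X
  rw [frob, h]
  congr 1
  simp only [Complex.re_sum, Complex.sq_norm]
  congr 1; ext i; congr 1; ext j
  rw [show star (X i j) = starRingEnd ℂ (X i j) from rfl, Complex.mul_conj, Complex.ofReal_re]

lemma cs {n : Type*} [Fintype n] (X Y : Matrix n n ℂ) :
    ‖hsInner X Y‖ ≤ frob X * frob Y := by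
  let x : EuclideanSpace ℂ (n × n) := WithLp.toLp 2 (fun p : n × n => X p.1 p.2)
  let y : EuclideanSpace ℂ (n × n) := WithLp.toLp 2 (fun p : n × n => Y p.1 p.2)
  have h1 : hsInner X Y = inner ℂ y x := by
    rw [hsInner_eq_sum]
    simp [PiLp.inner_apply, x, y, mul_comm, Fintype.sum_prod_type]
  have h2 : ‖hsInner X Y‖ ≤ ‖y‖ * ‖x‖ := by
    rw [h1]; exact norm_inner_le_norm y x
  have hx : ‖x‖ = frob X := by
    rw [EuclideanSpace.norm_eq, frob_eq_sum]
    simp [Fintype.sum_prod_type, x]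
  have hy : ‖y‖ = frob Y := by
    rw [EuclideanSpace.norm_eq, frob_eq_sum]
    simp [Fintype.sum_prod_type, y]
  rw [hx, hy] at h2
  linarith

lemma liftedU_eq {N₁ D₁ : ℕ} (U : Fin D₁ → Matrix (Fin N₁) (Fin N₁) ℂ) :
    liftedU U = Matrix.blockDiagonal U := by
  ext ⟨a, b⟩ ⟨c, d⟩
  rfl

lemma kron_mixed {N₁ D₁ : ℕ} (X : Matrix (Fin N₁) (Fin N₁) ℂ) :
    X ⊗ₖ mixedState (Fin D₁) =
      ((D₁ : ℂ)⁻¹) • Matrix.blockDiagonal (fun _ : Fin D₁ => X) := by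
  ext ⟨a, b⟩ ⟨c, d⟩
  simp only [Matrix.kroneckerMap_apply, mixedState, Matrix.smul_apply,
    Matrix.blockDiagonal_apply, Matrix.one_apply, Fintype.card_fin, smul_eq_mul]
  by_cases h : b = d <;> simp [h, mul_comm]

/-- Claim (parallel part): for `A = σ ⊗ Ĩ` and `B = η ⊗ Ĩ` with `σ` traceless,
`|⟨Ġ₁(A), B⟩| ≤ λ₁ ‖A‖ ‖B‖`. -/
theorem claim_zigzag_parallel {N₁ D₁ : ℕ} {lam₁ : ℝ}
    (U : Fin D₁ → Matrix (Fin N₁) (Fin N₁) ℂ)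
    (hU : ∀ d, U d ∈ Matrix.unitaryGroup (Fin N₁) ℂ)
    (G₁ : Matrix (Fin N₁) (Fin N₁) ℂ → Matrix (Fin N₁) (Fin N₁) ℂ)
    (hG₁ : ∀ X, G₁ X = (D₁ : ℂ)⁻¹ • ∑ d, U d * X * (U d)ᴴ)
    (hcontr : ∀ σ : Matrix (Fin N₁) (Fin N₁) ℂ, Matrix.trace σ = 0 →
      frob (G₁ σ) ≤ lam₁ * frob σ)
    (σ η : Matrix (Fin N₁) (Fin N₁) ℂ) (hσ : Matrix.trace σ = 0)
    (A B : Matrix (Fin N₁ × Fin D₁) (Fin N₁ × Fin D₁) ℂ)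
    (hA : A = σ ⊗ₖ mixedState (Fin D₁)) (hB : B = η ⊗ₖ mixedState (Fin D₁)) :
    ‖hsInner (liftedU U * A * (liftedU U)ᴴ) B‖ ≤
      lam₁ * frob A * frob B := by
  subst hA hB
  set c : ℂ := (D₁ : ℂ)⁻¹ with hc
  have hstarc : star c = c := by simp [hc]
  have hcD : c * c * (D₁ : ℂ) = c := by
    rcases Nat.eq_zero_or_pos D₁ with h | h
    · simp [hc, h]
    · have hD : (D₁ : ℂ) ≠ 0 := by exact_mod_cast h.ne'
      rw [hc, mul_assoc, inv_mul_cancel₀ hD, mul_one]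
  -- key identity
  have key : hsInner (liftedU U * (σ ⊗ₖ mixedState (Fin D₁)) * (liftedU U)ᴴ)
      (η ⊗ₖ mixedState (Fin D₁)) = c * hsInner (G₁ σ) η := by
    rw [liftedU_eq, kron_mixed, kron_mixed, hsInner, hsInner, hG₁]
    simp only [Matrix.conjTranspose_smul, hstarc, Matrix.mul_smul, Matrix.smul_mul,
      Matrix.blockDiagonal_conjTranspose, ← Matrix.blockDiagonal_mul,
      Matrix.trace_smul, Matrix.sum_mul, Matrix.trace_blockDiagonal,
      Matrix.trace_sum, smul_eq_mul, Finset.sum_const, Finset.card_univ,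
      Fintype.card_fin]
    rw [← hc, hstarc]
  -- frobenius norms of the kronecker products
  have frobK : ∀ X : Matrix (Fin N₁) (Fin N₁) ℂ,
      frob (X ⊗ₖ mixedState (Fin D₁)) = Real.sqrt ((D₁ : ℝ)⁻¹) * frob X := by
    intro X
    have htr : Matrix.trace ((X ⊗ₖ mixedState (Fin D₁)) * (X ⊗ₖ mixedState (Fin D₁))ᴴ)
        = c * Matrix.trace (X * Xᴴ) := by
      rw [kron_mixed]
      simp only [Matrix.conjTranspose_smul, hstarc, Matrix.mul_smul, Matrix.smul_mul,
        Matrix.blockDiagonal_conjTranspose, ← Matrix.blockDiagonal_mul,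
        Matrix.trace_smul, Matrix.trace_blockDiagonal, smul_eq_mul,
        Finset.sum_const, Finset.card_univ, Fintype.card_fin]
      rcases Nat.eq_zero_or_pos D₁ with h | h
      · simp [hc, h]
      · have hD : (D₁ : ℂ) ≠ 0 := by exact_mod_cast h.ne'
        simp only [hc, star_inv₀, Complex.star_def, Complex.conj_natCast, nsmul_eq_mul]
        field_simp
    rw [frob, htr]
    have hre : (c * Matrix.trace (X * Xᴴ)).re = (D₁ : ℝ)⁻¹ * (Matrix.trace (X * Xᴴ)).re := by
      have : c = ((D₁ : ℝ)⁻¹ : ℂ) := by push_cast [hc]; ring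
      rw [this]; simp [Complex.mul_re]
    rw [hre, Real.sqrt_mul (by positivity)]
    rfl
  rw [frobK, frobK, key]
  have habs : ‖c‖ = (D₁ : ℝ)⁻¹ := by
    rw [hc]; simp [map_inv₀]
  rw [norm_mul, habs]
  have h1 : ‖hsInner (G₁ σ) η‖ ≤ frob (G₁ σ) * frob η := cs _ _
  have h2 : frob (G₁ σ) ≤ lam₁ * frob σ := hcontr σ hσ
  have hη : (0:ℝ) ≤ frob η := Real.sqrt_nonneg _
  have hσ' : (0:ℝ) ≤ frob σ := Real.sqrt_nonneg _
  have hr : (0:ℝ) ≤ (D₁ : ℝ)⁻¹ := by positivity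
  have hs : Real.sqrt ((D₁ : ℝ)⁻¹) ^ 2 = (D₁ : ℝ)⁻¹ := Real.sq_sqrt hr
  calc (D₁ : ℝ)⁻¹ * ‖hsInner (G₁ σ) η‖
      ≤ (D₁ : ℝ)⁻¹ * (frob (G₁ σ) * frob η) := by
        exact mul_le_mul_of_nonneg_left h1 hr
    _ ≤ (D₁ : ℝ)⁻¹ * ((lam₁ * frob σ) * frob η) := by
        exact mul_le_mul_of_nonneg_left (mul_le_mul_of_nonneg_right h2 hη) hr
    _ = lam₁ * (Real.sqrt ((D₁ : ℝ)⁻¹) * frob σ) * (Real.sqrt ((D₁ : ℝ)⁻¹) * frob η) := by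
        linear_combination (-(lam₁ * frob σ * frob η)) * hs
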